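/- The language L_eq\bar{eq} = { a·w : w ∈ L_eq } ∪ { b·w : w ∈ {a,b}* and w ∉ L_eq } over the alphabet {a,b} belongs to PostS. -/

import Mathlib

noncomputable section

/-- The input alphabet extended with the two endmarkers `¢` and `$`. -/
inductive ESym (α : Type) : Type where
  | cent : ESym α
  | dollar : ESym α
  | letter : α → ESym α

/-- The state distribution obtained by applying, in order, the matrices for
`¢`, the letters of `w`, and `$` to the standard basis vector at the initial state `0`. -/
def pRun {α : Type} {n : ℕ} (A : ESym α → Matrix (Fin (n + 1)) (Fin (n + 1)) ℝ)
    (w : List α) : Fin (n + 1) → ℝ :=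
  (ESym.cent :: (w.map ESym.letter ++ [ESym.dollar])).foldl
    (fun v σ => (A σ).mulVec v) (Pi.single 0 1)

/-- A real-time probabilistic finite automaton with postselection (RT-PostPFA). -/
structure PostPFA (α : Type) where
  n : ℕ
  A : ESym α → Matrix (Fin (n + 1)) (Fin (n + 1)) ℝ
  nonneg : ∀ σ i j, 0 ≤ A σ i j
  colSum : ∀ σ j, ∑ i, A σ i j = 1
  Qpa : Finset (Fin (n + 1))
  Qpr : Finset (Fin (n + 1))
  disj : Disjoint Qpa Qpr
  postPos : ∀ w : List α,
    0 < (∑ i ∈ Qpa, pRun A w i) + (∑ i ∈ Qpr, pRun A w i)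

/-- Acceptance probability before postselection. -/
def PostPFA.pacc {α : Type} (M : PostPFA α) (w : List α) : ℝ :=
  ∑ i ∈ M.Qpa, pRun M.A w i

/-- Rejection probability before postselection. -/
def PostPFA.prej {α : Type} (M : PostPFA α) (w : List α) : ℝ :=
  ∑ i ∈ M.Qpr, pRun M.A w i

/-- Normalized acceptance probability of an RT-PostPFA. -/
def PostPFA.fa {α : Type} (M : PostPFA α) (w : List α) : ℝ :=
  M.pacc w / (M.pacc w + M.prej w)

/-- Recognition of a language with error bound `ε`. -/
def PostPFA.Recognizes {α : Type} (M : PostPFA α) (L : Set (List α)) (ε : ℝ) : Prop :=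
  ∀ w : List α, (w ∈ L → 1 - ε ≤ M.fa w) ∧ (w ∉ L → M.fa w ≤ ε)

/-- The class of languages recognized by RT-PostPFAs with bounded error. -/
def PostS {α : Type} (L : Set (List α)) : Prop :=
  ∃ (M : PostPFA α) (ε : ℝ), 0 ≤ ε ∧ ε < 1 / 2 ∧ M.Recognizes L ε

/-- Recognition with zero error: `fa = 1` on members, `fa = 0` on non-members. -/
def PostPFA.RecognizesZero {α : Type} (M : PostPFA α) (L : Set (List α)) : Prop :=
  ∀ w : List α, (w ∈ L → M.fa w = 1) ∧ (w ∉ L → M.fa w = 0)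

/-- The class of languages recognized by RT-PostPFAs with zero error. -/
def ZPostS {α : Type} (L : Set (List α)) : Prop :=
  ∃ M : PostPFA α, M.RecognizesZero L

/-- The two-letter alphabet `{a, b}`. -/
inductive TwoSym : Type where
  | a : TwoSym
  | b : TwoSym
deriving DecidableEq

instance : Fintype TwoSym where
  elems := {TwoSym.a, TwoSym.b}
  complete := by intro x; cases x <;> simp

/-- The language of words with equally many `a`s and `b`s. -/
def Leq : Set (List TwoSym) := {w | w.count TwoSym.a = w.count TwoSym.b}

/-- The language of palindromes over `{a, b}`. -/
def Lpal : Set (List TwoSym) := {w | w.reverse = w}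

/-- The language `L_eq\bar{eq} = a·L_eq ∪ b·(complement of L_eq)`. -/
def Leqeq : Set (List TwoSym) :=
  {w | ∃ u : List TwoSym,
    (w = TwoSym.a :: u ∧ u ∈ Leq) ∨ (w = TwoSym.b :: u ∧ u ∉ Leq)}


namespace LeqeqAux

section CV
variable {α : Type*} (x : α)
@[simp] lemma cv2_0 (u : Fin 1 → α) : Matrix.vecCons x u (0 : Fin 2) = x := rfl
@[simp] lemma cm2_0 (u : Fin 1 → α) (h : 0 < 2) : Matrix.vecCons x u (⟨0, h⟩ : Fin 2) = x := rfl
@[simp] lemma cv2_1 (u : Fin 1 → α) : Matrix.vecCons x u (1 : Fin 2) = u 0 := rfl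
@[simp] lemma cm2_1 (u : Fin 1 → α) (h : 1 < 2) : Matrix.vecCons x u (⟨1, h⟩ : Fin 2) = u 0 := rfl
@[simp] lemma cv3_0 (u : Fin 2 → α) : Matrix.vecCons x u (0 : Fin 3) = x := rfl
@[simp] lemma cm3_0 (u : Fin 2 → α) (h : 0 < 3) : Matrix.vecCons x u (⟨0, h⟩ : Fin 3) = x := rfl
@[simp] lemma cv3_1 (u : Fin 2 → α) : Matrix.vecCons x u (1 : Fin 3) = u 0 := rfl
@[simp] lemma cm3_1 (u : Fin 2 → α) (h : 1 < 3) : Matrix.vecCons x u (⟨1, h⟩ : Fin 3) = u 0 := rfl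
@[simp] lemma cv3_2 (u : Fin 2 → α) : Matrix.vecCons x u (2 : Fin 3) = u 1 := rfl
@[simp] lemma cm3_2 (u : Fin 2 → α) (h : 2 < 3) : Matrix.vecCons x u (⟨2, h⟩ : Fin 3) = u 1 := rfl
@[simp] lemma cv4_0 (u : Fin 3 → α) : Matrix.vecCons x u (0 : Fin 4) = x := rfl
@[simp] lemma cm4_0 (u : Fin 3 → α) (h : 0 < 4) : Matrix.vecCons x u (⟨0, h⟩ : Fin 4) = x := rfl
@[simp] lemma cv4_1 (u : Fin 3 → α) : Matrix.vecCons x u (1 : Fin 4) = u 0 := rfl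
@[simp] lemma cm4_1 (u : Fin 3 → α) (h : 1 < 4) : Matrix.vecCons x u (⟨1, h⟩ : Fin 4) = u 0 := rfl
@[simp] lemma cv4_2 (u : Fin 3 → α) : Matrix.vecCons x u (2 : Fin 4) = u 1 := rfl
@[simp] lemma cm4_2 (u : Fin 3 → α) (h : 2 < 4) : Matrix.vecCons x u (⟨2, h⟩ : Fin 4) = u 1 := rfl
@[simp] lemma cv4_3 (u : Fin 3 → α) : Matrix.vecCons x u (3 : Fin 4) = u 2 := rfl
@[simp] lemma cm4_3 (u : Fin 3 → α) (h : 3 < 4) : Matrix.vecCons x u (⟨3, h⟩ : Fin 4) = u 2 := rfl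
@[simp] lemma cv5_0 (u : Fin 4 → α) : Matrix.vecCons x u (0 : Fin 5) = x := rfl
@[simp] lemma cm5_0 (u : Fin 4 → α) (h : 0 < 5) : Matrix.vecCons x u (⟨0, h⟩ : Fin 5) = x := rfl
@[simp] lemma cv5_1 (u : Fin 4 → α) : Matrix.vecCons x u (1 : Fin 5) = u 0 := rfl
@[simp] lemma cm5_1 (u : Fin 4 → α) (h : 1 < 5) : Matrix.vecCons x u (⟨1, h⟩ : Fin 5) = u 0 := rfl
@[simp] lemma cv5_2 (u : Fin 4 → α) : Matrix.vecCons x u (2 : Fin 5) = u 1 := rfl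
@[simp] lemma cm5_2 (u : Fin 4 → α) (h : 2 < 5) : Matrix.vecCons x u (⟨2, h⟩ : Fin 5) = u 1 := rfl
@[simp] lemma cv5_3 (u : Fin 4 → α) : Matrix.vecCons x u (3 : Fin 5) = u 2 := rfl
@[simp] lemma cm5_3 (u : Fin 4 → α) (h : 3 < 5) : Matrix.vecCons x u (⟨3, h⟩ : Fin 5) = u 2 := rfl
@[simp] lemma cv5_4 (u : Fin 4 → α) : Matrix.vecCons x u (4 : Fin 5) = u 3 := rfl
@[simp] lemma cm5_4 (u : Fin 4 → α) (h : 4 < 5) : Matrix.vecCons x u (⟨4, h⟩ : Fin 5) = u 3 := rfl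
@[simp] lemma cv6_0 (u : Fin 5 → α) : Matrix.vecCons x u (0 : Fin 6) = x := rfl
@[simp] lemma cm6_0 (u : Fin 5 → α) (h : 0 < 6) : Matrix.vecCons x u (⟨0, h⟩ : Fin 6) = x := rfl
@[simp] lemma cv6_1 (u : Fin 5 → α) : Matrix.vecCons x u (1 : Fin 6) = u 0 := rfl
@[simp] lemma cm6_1 (u : Fin 5 → α) (h : 1 < 6) : Matrix.vecCons x u (⟨1, h⟩ : Fin 6) = u 0 := rfl
@[simp] lemma cv6_2 (u : Fin 5 → α) : Matrix.vecCons x u (2 : Fin 6) = u 1 := rfl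
@[simp] lemma cm6_2 (u : Fin 5 → α) (h : 2 < 6) : Matrix.vecCons x u (⟨2, h⟩ : Fin 6) = u 1 := rfl
@[simp] lemma cv6_3 (u : Fin 5 → α) : Matrix.vecCons x u (3 : Fin 6) = u 2 := rfl
@[simp] lemma cm6_3 (u : Fin 5 → α) (h : 3 < 6) : Matrix.vecCons x u (⟨3, h⟩ : Fin 6) = u 2 := rfl
@[simp] lemma cv6_4 (u : Fin 5 → α) : Matrix.vecCons x u (4 : Fin 6) = u 3 := rfl
@[simp] lemma cm6_4 (u : Fin 5 → α) (h : 4 < 6) : Matrix.vecCons x u (⟨4, h⟩ : Fin 6) = u 3 := rfl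
@[simp] lemma cv6_5 (u : Fin 5 → α) : Matrix.vecCons x u (5 : Fin 6) = u 4 := rfl
@[simp] lemma cm6_5 (u : Fin 5 → α) (h : 5 < 6) : Matrix.vecCons x u (⟨5, h⟩ : Fin 6) = u 4 := rfl
@[simp] lemma cv7_0 (u : Fin 6 → α) : Matrix.vecCons x u (0 : Fin 7) = x := rfl
@[simp] lemma cm7_0 (u : Fin 6 → α) (h : 0 < 7) : Matrix.vecCons x u (⟨0, h⟩ : Fin 7) = x := rfl
@[simp] lemma cv7_1 (u : Fin 6 → α) : Matrix.vecCons x u (1 : Fin 7) = u 0 := rfl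
@[simp] lemma cm7_1 (u : Fin 6 → α) (h : 1 < 7) : Matrix.vecCons x u (⟨1, h⟩ : Fin 7) = u 0 := rfl
@[simp] lemma cv7_2 (u : Fin 6 → α) : Matrix.vecCons x u (2 : Fin 7) = u 1 := rfl
@[simp] lemma cm7_2 (u : Fin 6 → α) (h : 2 < 7) : Matrix.vecCons x u (⟨2, h⟩ : Fin 7) = u 1 := rfl
@[simp] lemma cv7_3 (u : Fin 6 → α) : Matrix.vecCons x u (3 : Fin 7) = u 2 := rfl
@[simp] lemma cm7_3 (u : Fin 6 → α) (h : 3 < 7) : Matrix.vecCons x u (⟨3, h⟩ : Fin 7) = u 2 := rfl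
@[simp] lemma cv7_4 (u : Fin 6 → α) : Matrix.vecCons x u (4 : Fin 7) = u 3 := rfl
@[simp] lemma cm7_4 (u : Fin 6 → α) (h : 4 < 7) : Matrix.vecCons x u (⟨4, h⟩ : Fin 7) = u 3 := rfl
@[simp] lemma cv7_5 (u : Fin 6 → α) : Matrix.vecCons x u (5 : Fin 7) = u 4 := rfl
@[simp] lemma cm7_5 (u : Fin 6 → α) (h : 5 < 7) : Matrix.vecCons x u (⟨5, h⟩ : Fin 7) = u 4 := rfl
@[simp] lemma cv7_6 (u : Fin 6 → α) : Matrix.vecCons x u (6 : Fin 7) = u 5 := rfl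
@[simp] lemma cm7_6 (u : Fin 6 → α) (h : 6 < 7) : Matrix.vecCons x u (⟨6, h⟩ : Fin 7) = u 5 := rfl
@[simp] lemma cv8_0 (u : Fin 7 → α) : Matrix.vecCons x u (0 : Fin 8) = x := rfl
@[simp] lemma cm8_0 (u : Fin 7 → α) (h : 0 < 8) : Matrix.vecCons x u (⟨0, h⟩ : Fin 8) = x := rfl
@[simp] lemma cv8_1 (u : Fin 7 → α) : Matrix.vecCons x u (1 : Fin 8) = u 0 := rfl
@[simp] lemma cm8_1 (u : Fin 7 → α) (h : 1 < 8) : Matrix.vecCons x u (⟨1, h⟩ : Fin 8) = u 0 := rfl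
@[simp] lemma cv8_2 (u : Fin 7 → α) : Matrix.vecCons x u (2 : Fin 8) = u 1 := rfl
@[simp] lemma cm8_2 (u : Fin 7 → α) (h : 2 < 8) : Matrix.vecCons x u (⟨2, h⟩ : Fin 8) = u 1 := rfl
@[simp] lemma cv8_3 (u : Fin 7 → α) : Matrix.vecCons x u (3 : Fin 8) = u 2 := rfl
@[simp] lemma cm8_3 (u : Fin 7 → α) (h : 3 < 8) : Matrix.vecCons x u (⟨3, h⟩ : Fin 8) = u 2 := rfl
@[simp] lemma cv8_4 (u : Fin 7 → α) : Matrix.vecCons x u (4 : Fin 8) = u 3 := rfl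
@[simp] lemma cm8_4 (u : Fin 7 → α) (h : 4 < 8) : Matrix.vecCons x u (⟨4, h⟩ : Fin 8) = u 3 := rfl
@[simp] lemma cv8_5 (u : Fin 7 → α) : Matrix.vecCons x u (5 : Fin 8) = u 4 := rfl
@[simp] lemma cm8_5 (u : Fin 7 → α) (h : 5 < 8) : Matrix.vecCons x u (⟨5, h⟩ : Fin 8) = u 4 := rfl
@[simp] lemma cv8_6 (u : Fin 7 → α) : Matrix.vecCons x u (6 : Fin 8) = u 5 := rfl
@[simp] lemma cm8_6 (u : Fin 7 → α) (h : 6 < 8) : Matrix.vecCons x u (⟨6, h⟩ : Fin 8) = u 5 := rfl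
@[simp] lemma cv8_7 (u : Fin 7 → α) : Matrix.vecCons x u (7 : Fin 8) = u 6 := rfl
@[simp] lemma cm8_7 (u : Fin 7 → α) (h : 7 < 8) : Matrix.vecCons x u (⟨7, h⟩ : Fin 8) = u 6 := rfl
lemma vh8_0 (v : Fin 8 → α) : Matrix.vecHead v = v 0 := rfl
lemma vh8_1 (v : Fin 8 → α) : Matrix.vecHead (Matrix.vecTail v) = v 1 := rfl
lemma vh8_2 (v : Fin 8 → α) : Matrix.vecHead (Matrix.vecTail (Matrix.vecTail v)) = v 2 := rfl
lemma vh8_3 (v : Fin 8 → α) : Matrix.vecHead (Matrix.vecTail (Matrix.vecTail (Matrix.vecTail v))) = v 3 := rfl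
lemma vh8_4 (v : Fin 8 → α) : Matrix.vecHead (Matrix.vecTail (Matrix.vecTail (Matrix.vecTail (Matrix.vecTail v)))) = v 4 := rfl
lemma vh8_5 (v : Fin 8 → α) : Matrix.vecHead (Matrix.vecTail (Matrix.vecTail (Matrix.vecTail (Matrix.vecTail (Matrix.vecTail v))))) = v 5 := rfl
lemma vh8_6 (v : Fin 8 → α) : Matrix.vecHead (Matrix.vecTail (Matrix.vecTail (Matrix.vecTail (Matrix.vecTail (Matrix.vecTail (Matrix.vecTail v)))))) = v 6 := rfl
lemma vh8_7 (v : Fin 8 → α) : Matrix.vecHead (Matrix.vecTail (Matrix.vecTail (Matrix.vecTail (Matrix.vecTail (Matrix.vecTail (Matrix.vecTail (Matrix.vecTail v))))))) = v 7 := rfl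

end CV

def Ma : Matrix (Fin 8) (Fin 8) ℝ :=
  !![0,0,0,0,0,0,0,0;
     1/8,1/2,0,0,0,0,0,0;
     1/8,0,1/32,0,0,0,0,0;
     3/8,0,0,1/8,0,0,0,0;
     0,0,0,0,1/2,0,0,0;
     0,0,0,0,0,1/32,0,0;
     0,0,0,0,0,0,1/8,0;
     3/8,1/2,31/32,7/8,1/2,31/32,7/8,1]

def Mb : Matrix (Fin 8) (Fin 8) ℝ :=
  !![0,0,0,0,0,0,0,0;
     0,1/32,0,0,0,0,0,0;
     0,0,1/2,0,0,0,0,0;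
     0,0,0,1/8,0,0,0,0;
     1/8,0,0,0,1/32,0,0,0;
     1/8,0,0,0,0,1/2,0,0;
     3/8,0,0,0,0,0,1/8,0;
     3/8,31/32,1/2,7/8,31/32,1/2,7/8,1]

def Md : Matrix (Fin 8) (Fin 8) ℝ :=
  !![0,0,0,0,0,0,0,0;
     0,1,0,0,0,0,0,0;
     0,0,1,0,0,0,0,0;
     0,0,0,1,0,0,0,0;
     0,0,0,0,1,0,0,0;
     0,0,0,0,0,1,0,0;
     1,0,0,0,0,0,1,0;
     0,0,0,0,0,0,0,1]

def Am : ESym TwoSym → Matrix (Fin 8) (Fin 8) ℝ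
  | ESym.cent => 1
  | ESym.dollar => Md
  | ESym.letter TwoSym.a => Ma
  | ESym.letter TwoSym.b => Mb

lemma stepA (v : Fin 8 → ℝ) (h0 : v 0 = 0) :
    Ma.mulVec v 0 = 0 ∧ Ma.mulVec v 1 = v 1 * (1/2) ∧ Ma.mulVec v 2 = v 2 * (1/32) ∧
    Ma.mulVec v 3 = v 3 * (1/8) ∧ Ma.mulVec v 4 = v 4 * (1/2) ∧
    Ma.mulVec v 5 = v 5 * (1/32) ∧ Ma.mulVec v 6 = v 6 * (1/8) := by
  refine ⟨?_, ?_, ?_, ?_, ?_, ?_, ?_⟩ <;>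
    simp [Ma, Matrix.mulVec, dotProduct, Fin.sum_univ_eight, h0, vh8_0, vh8_1, vh8_2, vh8_3, vh8_4, vh8_5, vh8_6, vh8_7] <;> ring

lemma stepB (v : Fin 8 → ℝ) (h0 : v 0 = 0) :
    Mb.mulVec v 0 = 0 ∧ Mb.mulVec v 1 = v 1 * (1/32) ∧ Mb.mulVec v 2 = v 2 * (1/2) ∧
    Mb.mulVec v 3 = v 3 * (1/8) ∧ Mb.mulVec v 4 = v 4 * (1/32) ∧
    Mb.mulVec v 5 = v 5 * (1/2) ∧ Mb.mulVec v 6 = v 6 * (1/8) := by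
  refine ⟨?_, ?_, ?_, ?_, ?_, ?_, ?_⟩ <;>
    simp [Mb, Matrix.mulVec, dotProduct, Fin.sum_univ_eight, h0, vh8_0, vh8_1, vh8_2, vh8_3, vh8_4, vh8_5, vh8_6, vh8_7] <;> ring

lemma stepD (v : Fin 8 → ℝ) (h0 : v 0 = 0) :
    Md.mulVec v 1 = v 1 ∧ Md.mulVec v 2 = v 2 ∧ Md.mulVec v 3 = v 3 ∧
    Md.mulVec v 4 = v 4 ∧ Md.mulVec v 5 = v 5 ∧ Md.mulVec v 6 = v 6 := by
  refine ⟨?_, ?_, ?_, ?_, ?_, ?_⟩ <;>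
    simp [Md, Matrix.mulVec, dotProduct, Fin.sum_univ_eight, h0, vh8_0, vh8_1, vh8_2, vh8_3, vh8_4, vh8_5, vh8_6, vh8_7]

/-- scaling factors -/
def fx (u : List TwoSym) : ℝ := (1/2)^(u.count TwoSym.a) * (1/32)^(u.count TwoSym.b)
def fy (u : List TwoSym) : ℝ := (1/32)^(u.count TwoSym.a) * (1/2)^(u.count TwoSym.b)
def fz (u : List TwoSym) : ℝ := (1/8)^(u.count TwoSym.a) * (1/8)^(u.count TwoSym.b)

lemma fx_pos (u : List TwoSym) : 0 < fx u := by unfold fx; positivity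
lemma fy_pos (u : List TwoSym) : 0 < fy u := by unfold fy; positivity
lemma fz_pos (u : List TwoSym) : 0 < fz u := by unfold fz; positivity

lemma fx_a (u : List TwoSym) : fx (TwoSym.a :: u) = (1/2) * fx u := by
  simp [fx, List.count_cons, pow_succ] <;> ring
lemma fx_b (u : List TwoSym) : fx (TwoSym.b :: u) = (1/32) * fx u := by
  simp [fx, List.count_cons, pow_succ] <;> ring
lemma fy_a (u : List TwoSym) : fy (TwoSym.a :: u) = (1/32) * fy u := by
  simp [fy, List.count_cons, pow_succ] <;> ring
lemma fy_b (u : List TwoSym) : fy (TwoSym.b :: u) = (1/2) * fy u := by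
  simp [fy, List.count_cons, pow_succ] <;> ring
lemma fz_a (u : List TwoSym) : fz (TwoSym.a :: u) = (1/8) * fz u := by
  simp [fz, List.count_cons, pow_succ] <;> ring
lemma fz_b (u : List TwoSym) : fz (TwoSym.b :: u) = (1/8) * fz u := by
  simp [fz, List.count_cons, pow_succ] <;> ring

lemma fold_eval (u : List TwoSym) : ∀ (v : Fin 8 → ℝ), v 0 = 0 →
    ((u.map ESym.letter).foldl (fun v σ => (Am σ).mulVec v) v) 0 = 0 ∧
    ((u.map ESym.letter).foldl (fun v σ => (Am σ).mulVec v) v) 1 = v 1 * fx u ∧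
    ((u.map ESym.letter).foldl (fun v σ => (Am σ).mulVec v) v) 2 = v 2 * fy u ∧
    ((u.map ESym.letter).foldl (fun v σ => (Am σ).mulVec v) v) 3 = v 3 * fz u ∧
    ((u.map ESym.letter).foldl (fun v σ => (Am σ).mulVec v) v) 4 = v 4 * fx u ∧
    ((u.map ESym.letter).foldl (fun v σ => (Am σ).mulVec v) v) 5 = v 5 * fy u ∧
    ((u.map ESym.letter).foldl (fun v σ => (Am σ).mulVec v) v) 6 = v 6 * fz u := by
  induction u with
  | nil => intro v h0; simp [fx, fy, fz, h0]
  | cons c u ih =>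
    intro v h0
    cases c with
    | a =>
      have h := stepA v h0
      obtain ⟨g0, g1, g2, g3, g4, g5, g6⟩ := ih (Ma.mulVec v) h.1
      simp only [List.map_cons, List.foldl_cons]
      rw [show Am (ESym.letter TwoSym.a) = Ma from rfl]
      refine ⟨g0, ?_, ?_, ?_, ?_, ?_, ?_⟩
      · rw [g1, h.2.1, fx_a] <;> ring
      · rw [g2, h.2.2.1, fy_a] <;> ring
      · rw [g3, h.2.2.2.1, fz_a] <;> ring
      · rw [g4, h.2.2.2.2.1, fx_a] <;> ring
      · rw [g5, h.2.2.2.2.2.1, fy_a] <;> ring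
      · rw [g6, h.2.2.2.2.2.2, fz_a] <;> ring
    | b =>
      have h := stepB v h0
      obtain ⟨g0, g1, g2, g3, g4, g5, g6⟩ := ih (Mb.mulVec v) h.1
      simp only [List.map_cons, List.foldl_cons]
      rw [show Am (ESym.letter TwoSym.b) = Mb from rfl]
      refine ⟨g0, ?_, ?_, ?_, ?_, ?_, ?_⟩
      · rw [g1, h.2.1, fx_b] <;> ring
      · rw [g2, h.2.2.1, fy_b] <;> ring
      · rw [g3, h.2.2.2.1, fz_b] <;> ring
      · rw [g4, h.2.2.2.2.1, fx_b] <;> ring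
      · rw [g5, h.2.2.2.2.2.1, fy_b] <;> ring
      · rw [g6, h.2.2.2.2.2.2, fz_b] <;> ring

lemma initA :
    Ma.mulVec (Pi.single 0 1) 0 = 0 ∧ Ma.mulVec (Pi.single 0 1) 1 = 1/8 ∧
    Ma.mulVec (Pi.single 0 1) 2 = 1/8 ∧ Ma.mulVec (Pi.single 0 1) 3 = 3/8 ∧
    Ma.mulVec (Pi.single 0 1) 4 = 0 ∧ Ma.mulVec (Pi.single 0 1) 5 = 0 ∧
    Ma.mulVec (Pi.single 0 1) 6 = 0 := by
  refine ⟨?_, ?_, ?_, ?_, ?_, ?_, ?_⟩ <;>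
    simp [Ma, Matrix.mulVec, dotProduct, Fin.sum_univ_eight, Pi.single_apply, vh8_0, vh8_1, vh8_2, vh8_3, vh8_4, vh8_5, vh8_6, vh8_7]

lemma initB :
    Mb.mulVec (Pi.single 0 1) 0 = 0 ∧ Mb.mulVec (Pi.single 0 1) 1 = 0 ∧
    Mb.mulVec (Pi.single 0 1) 2 = 0 ∧ Mb.mulVec (Pi.single 0 1) 3 = 0 ∧
    Mb.mulVec (Pi.single 0 1) 4 = 1/8 ∧ Mb.mulVec (Pi.single 0 1) 5 = 1/8 ∧
    Mb.mulVec (Pi.single 0 1) 6 = 3/8 := by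
  refine ⟨?_, ?_, ?_, ?_, ?_, ?_, ?_⟩ <;>
    simp [Mb, Matrix.mulVec, dotProduct, Fin.sum_univ_eight, Pi.single_apply, vh8_0, vh8_1, vh8_2, vh8_3, vh8_4, vh8_5, vh8_6, vh8_7]

lemma pRun_cons (c : TwoSym) (u : List TwoSym) :
    pRun Am (c :: u) =
      Md.mulVec (((u.map ESym.letter).foldl (fun v σ => (Am σ).mulVec v)
        ((Am (ESym.letter c)).mulVec (Pi.single 0 1)))) := by
  unfold pRun
  simp only [List.map_cons, List.foldl_cons, List.foldl_append, List.foldl_nil]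
  rw [show Am ESym.cent = 1 from rfl, Matrix.one_mulVec]
  rfl

lemma run_a (u : List TwoSym) :
    pRun Am (TwoSym.a :: u) 1 = 1/8 * fx u ∧ pRun Am (TwoSym.a :: u) 2 = 1/8 * fy u ∧
    pRun Am (TwoSym.a :: u) 3 = 3/8 * fz u ∧ pRun Am (TwoSym.a :: u) 4 = 0 ∧
    pRun Am (TwoSym.a :: u) 5 = 0 ∧ pRun Am (TwoSym.a :: u) 6 = 0 := by
  have e := initA
  have f := fold_eval u (Ma.mulVec (Pi.single 0 1)) e.1
  have d := stepD _ f.1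
  rw [pRun_cons, show Am (ESym.letter TwoSym.a) = Ma from rfl]
  refine ⟨?_, ?_, ?_, ?_, ?_, ?_⟩
  · rw [d.1, f.2.1, e.2.1] <;> ring
  · rw [d.2.1, f.2.2.1, e.2.2.1] <;> ring
  · rw [d.2.2.1, f.2.2.2.1, e.2.2.2.1] <;> ring
  · rw [d.2.2.2.1, f.2.2.2.2.1, e.2.2.2.2.1] <;> ring
  · rw [d.2.2.2.2.1, f.2.2.2.2.2.1, e.2.2.2.2.2.1] <;> ring
  · rw [d.2.2.2.2.2, f.2.2.2.2.2.2, e.2.2.2.2.2.2] <;> ring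

lemma run_b (u : List TwoSym) :
    pRun Am (TwoSym.b :: u) 1 = 0 ∧ pRun Am (TwoSym.b :: u) 2 = 0 ∧
    pRun Am (TwoSym.b :: u) 3 = 0 ∧ pRun Am (TwoSym.b :: u) 4 = 1/8 * fx u ∧
    pRun Am (TwoSym.b :: u) 5 = 1/8 * fy u ∧ pRun Am (TwoSym.b :: u) 6 = 3/8 * fz u := by
  have e := initB
  have f := fold_eval u (Mb.mulVec (Pi.single 0 1)) e.1
  have d := stepD _ f.1
  rw [pRun_cons, show Am (ESym.letter TwoSym.b) = Mb from rfl]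
  refine ⟨?_, ?_, ?_, ?_, ?_, ?_⟩
  · rw [d.1, f.2.1, e.2.1] <;> ring
  · rw [d.2.1, f.2.2.1, e.2.2.1] <;> ring
  · rw [d.2.2.1, f.2.2.2.1, e.2.2.2.1] <;> ring
  · rw [d.2.2.2.1, f.2.2.2.2.1, e.2.2.2.2.1] <;> ring
  · rw [d.2.2.2.2.1, f.2.2.2.2.2.1, e.2.2.2.2.2.1] <;> ring
  · rw [d.2.2.2.2.2, f.2.2.2.2.2.2, e.2.2.2.2.2.2] <;> ring

lemma run_nil :
    pRun Am ([] : List TwoSym) 1 = 0 ∧ pRun Am ([] : List TwoSym) 2 = 0 ∧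
    pRun Am ([] : List TwoSym) 3 = 0 ∧ pRun Am ([] : List TwoSym) 4 = 0 ∧
    pRun Am ([] : List TwoSym) 5 = 0 ∧ pRun Am ([] : List TwoSym) 6 = 1 := by
  unfold pRun
  simp only [List.map_nil, List.nil_append, List.foldl_cons, List.foldl_nil]
  rw [show Am ESym.cent = 1 from rfl, Matrix.one_mulVec, show Am ESym.dollar = Md from rfl]
  refine ⟨?_, ?_, ?_, ?_, ?_, ?_⟩ <;>
    simp [Md, Matrix.mulVec, dotProduct, Fin.sum_univ_eight, Pi.single_apply, vh8_0, vh8_1, vh8_2, vh8_3, vh8_4, vh8_5, vh8_6, vh8_7]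

lemma sum345 (f : Fin 8 → ℝ) :
    ∑ i ∈ ({3, 4, 5} : Finset (Fin 8)), f i = f 3 + f 4 + f 5 := by
  rw [Finset.sum_insert (by decide), Finset.sum_insert (by decide), Finset.sum_singleton] <;> ring

lemma sum126 (f : Fin 8 → ℝ) :
    ∑ i ∈ ({1, 2, 6} : Finset (Fin 8)), f i = f 1 + f 2 + f 6 := by
  rw [Finset.sum_insert (by decide), Finset.sum_insert (by decide), Finset.sum_singleton] <;> ring

lemma key_pow (s : ℕ) (hs : 1 ≤ s) :
    17 * (1/8:ℝ)^s ≤ 4 * ((1/2)^s + (1/32)^s) := by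
  have h16 : (16:ℝ) * (1/32)^s ≤ (1/2)^s := by
    have h1 : ((1:ℝ)/16)^s ≤ (1/16)^1 :=
      pow_le_pow_of_le_one (by norm_num) (by norm_num) hs
    have h2 : ((1:ℝ)/32)^s = (1/16)^s * (1/2)^s := by
      rw [← mul_pow]; norm_num
    have h3 : (0:ℝ) < (1/2)^s := by positivity
    rw [h2]
    nlinarith [h3]
  have hz2 : ((1:ℝ)/2)^s * (1/32)^s = (1/8)^s * (1/8)^s := by
    rw [← mul_pow, ← mul_pow]; norm_num
  have hw : (0:ℝ) < (1/32)^s := by positivity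
  have hz : (0:ℝ) < (1/8)^s := by positivity
  have hz4 : 4 * (1/32:ℝ)^s ≤ (1/8)^s := by nlinarith
  nlinarith [mul_pos hw hz, sq_nonneg ((1/8:ℝ)^s - 4 * (1/32)^s)]

lemma key_lt (k s : ℕ) (hs : 1 ≤ s) :
    17 * ((1/8:ℝ)^(k+s) * (1/8)^k) ≤
      4 * ((1/2)^(k+s) * (1/32)^k + (1/32)^(k+s) * (1/2)^k) := by
  have hp : ((1:ℝ)/2)^k * (1/32)^k = (1/8)^k * (1/8)^k := by
    rw [← mul_pow, ← mul_pow]; norm_num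
  have hd := key_pow s hs
  have hr : (0:ℝ) ≤ (1/8:ℝ)^k * (1/8)^k := by positivity
  have h1 : (1/2:ℝ)^k*(1/2)^s*(1/32)^k + (1/32)^k*(1/32)^s*(1/2)^k
      = ((1/2:ℝ)^s+(1/32)^s)*((1/8)^k*(1/8)^k) := by
    linear_combination ((1/2:ℝ)^s + (1/32)^s) * hp
  have h2 : 17*((1/8:ℝ)^k*(1/8)^s*(1/8)^k) = 17*(1/8)^s*((1/8)^k*(1/8)^k) := by ring
  rw [pow_add, pow_add, pow_add, h2, h1]
  nlinarith [mul_le_mul_of_nonneg_right hd hr]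

lemma key (m k : ℕ) (h : m ≠ k) :
    17 * ((1/8:ℝ)^m * (1/8)^k) ≤
      4 * ((1/2)^m * (1/32)^k + (1/32)^m * (1/2)^k) := by
  rcases Nat.lt_or_ge m k with hlt | hge
  · obtain ⟨s, rfl⟩ := Nat.exists_eq_add_of_lt hlt
    have := key_lt m (s+1) (by omega)
    calc 17 * ((1/8:ℝ)^m * (1/8)^(m+s+1)) = 17 * ((1/8:ℝ)^(m+(s+1)) * (1/8)^m) := by ring
      _ ≤ 4 * ((1/2)^(m+(s+1)) * (1/32)^m + (1/32)^(m+(s+1)) * (1/2)^m) := this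
      _ = 4 * ((1/2)^m * (1/32)^(m+s+1) + (1/32)^m * (1/2)^(m+s+1)) := by ring
  · have hlt : k < m := lt_of_le_of_ne hge (Ne.symm h)
    obtain ⟨s, rfl⟩ := Nat.exists_eq_add_of_lt hlt
    have := key_lt k (s+1) (by omega)
    calc 17 * ((1/8:ℝ)^(k+s+1) * (1/8)^k) = 17 * ((1/8:ℝ)^(k+(s+1)) * (1/8)^k) := by ring
      _ ≤ 4 * ((1/2)^(k+(s+1)) * (1/32)^k + (1/32)^(k+(s+1)) * (1/2)^k) := this
      _ = 4 * ((1/2)^(k+s+1) * (1/32)^k + (1/32)^(k+s+1) * (1/2)^k) := by ring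

lemma eq_case (u : List TwoSym) (h : u.count TwoSym.a = u.count TwoSym.b) :
    fx u = fz u ∧ fy u = fz u := by
  unfold fx fy fz
  rw [h]
  constructor <;> rw [← mul_pow, ← mul_pow] <;> norm_num

set_option maxHeartbeats 1000000 in
lemma Ma_nonneg : ∀ i j, 0 ≤ Ma i j := by
  intro i j; fin_cases i <;> fin_cases j <;> norm_num [Ma]

set_option maxHeartbeats 1000000 in
lemma Mb_nonneg : ∀ i j, 0 ≤ Mb i j := by
  intro i j; fin_cases i <;> fin_cases j <;> norm_num [Mb]

set_option maxHeartbeats 1000000 in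
lemma Md_nonneg : ∀ i j, 0 ≤ Md i j := by
  intro i j; fin_cases i <;> fin_cases j <;> norm_num [Md]

set_option maxHeartbeats 1000000 in
lemma Ma_colSum : ∀ j, ∑ i, Ma i j = 1 := by
  intro j; fin_cases j <;>
    simp [Ma, Fin.sum_univ_eight, Matrix.vecHead, Matrix.vecTail, Function.comp] <;> norm_num

set_option maxHeartbeats 1000000 in
lemma Mb_colSum : ∀ j, ∑ i, Mb i j = 1 := by
  intro j; fin_cases j <;>
    simp [Mb, Fin.sum_univ_eight, Matrix.vecHead, Matrix.vecTail, Function.comp] <;> norm_num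

set_option maxHeartbeats 1000000 in
lemma Md_colSum : ∀ j, ∑ i, Md i j = 1 := by
  intro j; fin_cases j <;>
    simp [Md, Fin.sum_univ_eight, Matrix.vecHead, Matrix.vecTail, Function.comp] <;> norm_num

set_option maxHeartbeats 1000000 in
/-- the machine -/
def machine : PostPFA TwoSym where
  n := 7
  A := Am
  nonneg := by
    intro σ i j
    cases σ with
    | cent =>
      rw [show Am ESym.cent = 1 from rfl]
      by_cases h : i = j <;> simp [Matrix.one_apply, h]
    | dollar =>
      exact Md_nonneg i j
    | letter c =>
      cases c with
      | a =>
        exact Ma_nonneg i j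
      | b =>
        exact Mb_nonneg i j
  colSum := by
    intro σ j
    cases σ with
    | cent =>
      rw [show Am ESym.cent = 1 from rfl]
      simp [Matrix.one_apply]
    | dollar =>
      exact Md_colSum j
    | letter c =>
      cases c with
      | a =>
        exact Ma_colSum j
      | b =>
        exact Mb_colSum j
  Qpa := ({3, 4, 5} : Finset (Fin 8))
  Qpr := ({1, 2, 6} : Finset (Fin 8))
  disj := by decide
  postPos := by
    intro w
    have hpa : ∑ i ∈ ({3,4,5} : Finset (Fin 8)), pRun Am w i
        = pRun Am w 3 + pRun Am w 4 + pRun Am w 5 := sum345 _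
    have hpr : ∑ i ∈ ({1,2,6} : Finset (Fin 8)), pRun Am w i
        = pRun Am w 1 + pRun Am w 2 + pRun Am w 6 := sum126 _
    rw [hpa, hpr]
    match w with
    | [] =>
      obtain ⟨h1, h2, h3, h4, h5, h6⟩ := run_nil
      rw [h1, h2, h3, h4, h5, h6]; norm_num
    | TwoSym.a :: u =>
      obtain ⟨h1, h2, h3, h4, h5, h6⟩ := run_a u
      rw [h1, h2, h3, h4, h5, h6]
      have := fx_pos u; have := fy_pos u; have := fz_pos u
      linarith
    | TwoSym.b :: u =>
      obtain ⟨h1, h2, h3, h4, h5, h6⟩ := run_b u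
      rw [h1, h2, h3, h4, h5, h6]
      have := fx_pos u; have := fy_pos u; have := fz_pos u
      linarith

lemma machine_pacc (w : List TwoSym) :
    machine.pacc w = pRun Am w 3 + pRun Am w 4 + pRun Am w 5 := sum345 _

lemma machine_prej (w : List TwoSym) :
    machine.prej w = pRun Am w 1 + pRun Am w 2 + pRun Am w 6 := sum126 _

lemma mem_nil : ([] : List TwoSym) ∉ Leqeq := by
  rintro ⟨u, ⟨h, -⟩ | ⟨h, -⟩⟩ <;> simp at h

lemma mem_a (u : List TwoSym) : (TwoSym.a :: u) ∈ Leqeq ↔ u ∈ Leq := by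
  constructor
  · rintro ⟨u', ⟨heq, hu⟩ | ⟨heq, hu⟩⟩
    · injection heq with _ h2; subst h2; exact hu
    · injection heq with h1 _; simp at h1
  · intro hu; exact ⟨u, Or.inl ⟨rfl, hu⟩⟩

lemma mem_b (u : List TwoSym) : (TwoSym.b :: u) ∈ Leqeq ↔ u ∉ Leq := by
  constructor
  · rintro ⟨u', ⟨heq, hu⟩ | ⟨heq, hu⟩⟩
    · injection heq with h1 _; simp at h1
    · injection heq with _ h2; subst h2; exact hu
  · intro hu; exact ⟨u, Or.inr ⟨rfl, hu⟩⟩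

end LeqeqAux

open LeqeqAux in
/-- `L_eq\bar{eq}` belongs to `PostS`. -/
theorem Leqeq_mem_PostS : PostS Leqeq := by
  refine ⟨machine, 12/29, by norm_num, by norm_num, ?_⟩
  intro w
  match w with
  | [] =>
    constructor
    · intro h; exact absurd h mem_nil
    · intro _
      obtain ⟨h1, h2, h3, h4, h5, h6⟩ := run_nil
      have hp : machine.pacc [] = 0 := by rw [machine_pacc, h3, h4, h5] <;> ring
      have hr : machine.prej [] = 1 := by rw [machine_prej, h1, h2, h6] <;> ring
      unfold PostPFA.fa; rw [hp, hr]; norm_num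
  | TwoSym.a :: u =>
    obtain ⟨h1, h2, h3, h4, h5, h6⟩ := run_a u
    have hp : machine.pacc (TwoSym.a :: u) = 3/8 * fz u := by
      rw [machine_pacc, h3, h4, h5] <;> ring
    have hr : machine.prej (TwoSym.a :: u) = 1/8 * fx u + 1/8 * fy u := by
      rw [machine_prej, h1, h2, h6] <;> ring
    have hxp := fx_pos u; have hyp := fy_pos u; have hzp := fz_pos u
    constructor
    · intro h
      have hm : u ∈ Leq := (mem_a u).1 h
      obtain ⟨ex, ey⟩ := eq_case u hm
      unfold PostPFA.fa; rw [hp, hr, ex, ey]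
      rw [le_div_iff₀ (by linarith)]
      linarith
    · intro h
      have hm : u ∉ Leq := fun hu => h ((mem_a u).2 hu)
      have hk := key (u.count TwoSym.a) (u.count TwoSym.b) hm
      rw [show ((1:ℝ)/8)^(u.count TwoSym.a) * (1/8)^(u.count TwoSym.b) = fz u from rfl,
        show ((1:ℝ)/2)^(u.count TwoSym.a) * (1/32)^(u.count TwoSym.b) = fx u from rfl,
        show ((1:ℝ)/32)^(u.count TwoSym.a) * (1/2)^(u.count TwoSym.b) = fy u from rfl] at hk
      unfold PostPFA.fa; rw [hp, hr]
      rw [div_le_iff₀ (by linarith)]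
      linarith
  | TwoSym.b :: u =>
    obtain ⟨h1, h2, h3, h4, h5, h6⟩ := run_b u
    have hp : machine.pacc (TwoSym.b :: u) = 1/8 * fx u + 1/8 * fy u := by
      rw [machine_pacc, h3, h4, h5] <;> ring
    have hr : machine.prej (TwoSym.b :: u) = 3/8 * fz u := by
      rw [machine_prej, h1, h2, h6] <;> ring
    have hxp := fx_pos u; have hyp := fy_pos u; have hzp := fz_pos u
    constructor
    · intro h
      have hm : u ∉ Leq := (mem_b u).1 h
      have hk := key (u.count TwoSym.a) (u.count TwoSym.b) hm
      rw [show ((1:ℝ)/8)^(u.count TwoSym.a) * (1/8)^(u.count TwoSym.b) = fz u from rfl,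
        show ((1:ℝ)/2)^(u.count TwoSym.a) * (1/32)^(u.count TwoSym.b) = fx u from rfl,
        show ((1:ℝ)/32)^(u.count TwoSym.a) * (1/2)^(u.count TwoSym.b) = fy u from rfl] at hk
      unfold PostPFA.fa; rw [hp, hr]
      rw [le_div_iff₀ (by linarith)]
      linarith
    · intro h
      have hm : u ∈ Leq := not_not.1 (fun hu => h ((mem_b u).2 hu))
      obtain ⟨ex, ey⟩ := eq_case u hm
      unfold PostPFA.fa; rw [hp, hr, ex, ey]
      rw [div_le_iff₀ (by linarith)]
      linarith
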